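/- Fix a non-compact well-ordered space J and let X be a J-convergence space. Then the following are equivalent: (1) X is a J-unique convergence space; (2) X is a KC-space; (3) X is weakly Hausdorff; (4) the diagonal Δ = {(x,x) : x ∈ X} is closed in the J-product X ×_J X. -/

import Mathlib

open Set Topology TopologicalSpace

universe u v w

/-- The order topology on `WithTop α`; for a noncompact well-ordered `α` with the order
topology, `WithTop α` with this topology is the one-point (Alexandroff) compactification
`α ∪ {∞_α}`, in which `⊤ = ∞_α` is the maximum. -/
noncomputable instance withTopOrderTopology {α : Type*} [Preorder α] :
    TopologicalSpace (WithTop α) := Preorder.topology _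

/-- `I` is almost closed in the ordered topological space `S`:
`closure I \ I = {ℓ}` where `ℓ = min {s ∈ S | I < s}`. -/
def AlmostClosedIn {S : Type*} [LinearOrder S] [TopologicalSpace S] (I : Set S) : Prop :=
  ∃ ℓ : S, closure I \ I = {ℓ} ∧ IsLeast {s : S | ∀ i ∈ I, i < s} ℓ

/-- `I ⊆ J` is almost closed in `J ∪ {∞_J}` (modeled as `WithTop J` with the order topology). -/
def AlmostClosed {J : Type*} [LinearOrder J] (I : Set J) : Prop :=
  AlmostClosedIn ((fun j : J => (j : WithTop J)) '' I)

/-- A subset `C ⊆ X` is `J`-closed: for every almost closed `I ⊆ J` and continuous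
`f : I ∪ {∞_I} → X` (where `I ∪ {∞_I} = WithTop ↥I` is the one-point compactification of
`I` with its internal order topology) with `f(I) ⊆ C` one has `f(∞_I) ∈ C`. -/
def JClosedSet (J : Type v) [LinearOrder J] (X : Type u) [TopologicalSpace X] (C : Set X) : Prop :=
  ∀ I : Set J, AlmostClosed I → ∀ f : WithTop ↥I → X, Continuous f →
    (∀ i : ↥I, f (WithTop.some i) ∈ C) → f ⊤ ∈ C

/-- `U ⊆ X` is `J`-open iff its complement is `J`-closed. -/
def JOpenSet (J : Type v) [LinearOrder J] (X : Type u) [TopologicalSpace X] (U : Set X) : Prop :=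
  JClosedSet J X Uᶜ

/-- `X` is a `J`-convergence space. -/
def IsJConvergence (J : Type v) [LinearOrder J] (X : Type u) [TopologicalSpace X] : Prop :=
  ∀ A : Set X, ¬ IsClosed A →
    ∃ I : Set J, AlmostClosed I ∧ ∃ f : WithTop ↥I → X, Continuous f ∧
      (∀ i : ↥I, f (WithTop.some i) ∈ A) ∧ f ⊤ ∉ A

/-- `JX`: the topology of `J`-open sets. -/
noncomputable def jTop (J : Type v) [LinearOrder J] (X : Type u) [tX : TopologicalSpace X] :
    TopologicalSpace X := generateFrom {U : Set X | JOpenSet J X U}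

/-- `K` is a compact Hausdorff witness for the failure of `A` to be closed. -/
def CGWitness (K : Type v) [tK : TopologicalSpace K] (X : Type u) [TopologicalSpace X]
    (A : Set X) : Prop :=
  CompactSpace K ∧ T2Space K ∧ ∃ f : K → X, Continuous f ∧ ¬ IsClosed (f ⁻¹' A)

/-- `X` is compactly generated. -/
def CompactlyGen.{v', u'} (X : Type u') [TopologicalSpace X] : Prop :=
  ∀ A : Set X, ¬ IsClosed A → ∃ (K : Type v') (tK : TopologicalSpace K), @CGWitness K tK X _ A

/-- `kX`: `U` is open iff `f ⁻¹ U` is open for every continuous map from a compact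
Hausdorff space. -/
def kTop.{v', u'} (X : Type u') [tX : TopologicalSpace X] : TopologicalSpace X :=
  generateFrom {U : Set X |
    ∀ (K : Type v') (tK : TopologicalSpace K), @CompactSpace K tK → @T2Space K tK →
      ∀ f : K → X, Continuous[tK, tX] f → IsOpen[tK] (f ⁻¹' U)}

/-- The directed topology on the successor `J' ∪ {∞} = WithTop J'`: generated by singletons
`{j}` and final segments `(j, ∞]` for `j ∈ J'`. -/
def directedTopology (J' : Type*) [Preorder J'] : TopologicalSpace (WithTop J') :=
  generateFrom {s : Set (WithTop J') |
    (∃ j : J', s = {WithTop.some j}) ∨ ∃ j : J', s = Ioi (WithTop.some j)}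

/-- `J'` witnesses transfinite convergence into `A`. -/
def TransfiniteWitness (J' : Type v) [LinearOrder J'] (X : Type u) [TopologicalSpace X]
    (A : Set X) : Prop :=
  WellFoundedLT J' ∧ Nonempty J' ∧ NoMaxOrder J' ∧
    ∃ f : WithTop J' → X, Continuous[directedTopology J', _] f ∧
      (∀ j : J', f (WithTop.some j) ∈ A) ∧ f ⊤ ∉ A

/-- `X` is a transfinite sequential space. -/
def TransfiniteSequential.{v', u'} (X : Type u') [TopologicalSpace X] : Prop :=
  ∀ A : Set X, ¬ IsClosed A →
    ∃ (J' : Type v') (lo : LinearOrder J'), @TransfiniteWitness J' lo X _ A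

/-- `X` is a `J`-unique convergence space. -/
def JUnique (J : Type v) [LinearOrder J] (X : Type u) [TopologicalSpace X] : Prop :=
  ∀ I : Set J, AlmostClosed I → ∀ f g : WithTop ↥I → X, Continuous f → Continuous g →
    (∀ i : ↥I, f (WithTop.some i) = g (WithTop.some i)) → f = g

/-- The set `M(X,Y)` of continuous maps between spaces with explicitly given topologies. -/
def Cts (X : Type u) (Y : Type w) (tX : TopologicalSpace X) (tY : TopologicalSpace Y) :=
  {f : X → Y // Continuous[tX, tY] f}

/-- The `𝒥`-open topology on `M(X,Y)`, generated by the sets `W(t,U)`. -/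
noncomputable def mjTop (J : Type v) [LinearOrder J] {X : Type u} {Y : Type w}
    (tX : TopologicalSpace X) (tY : TopologicalSpace Y) :
    TopologicalSpace (Cts X Y tX tY) :=
  generateFrom {W : Set (Cts X Y tX tY) |
    ∃ I : Set J, AlmostClosed I ∧ ∃ t : WithTop ↥I → X, Continuous[_, tX] t ∧
      ∃ U : Set Y, IsOpen[tY] U ∧ W = {f | ∀ z : WithTop ↥I, f.1 (t z) ∈ U}}


set_option linter.unusedSectionVars false
set_option linter.unusedVariables false
set_option maxHeartbeats 1000000

section Gen19
variable {β : Type*} [LinearOrder β] [WellFoundedLT β]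

instance : OrderTopology (WithTop β) := ⟨rfl⟩

noncomputable def omin (T : Set (WithTop β)) (h : T.Nonempty) : WithTop β :=
  (IsWellFounded.wf (r := ((· < ·) : WithTop β → WithTop β → Prop))).min T h
theorem omin_mem (T : Set (WithTop β)) (h : T.Nonempty) : omin T h ∈ T :=
  WellFounded.min_mem _ T h
theorem omin_le {T : Set (WithTop β)} {h : T.Nonempty} {x : WithTop β} (hx : x ∈ T) :
    omin T h ≤ x := le_of_not_gt (WellFounded.not_lt_min _ T hx)
noncomputable def olub (T : Set (WithTop β)) : WithTop β :=
  omin (upperBounds T) ⟨⊤, fun _ _ => le_top⟩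
theorem isLUB_olub (T : Set (WithTop β)) : IsLUB T (olub T) :=
  ⟨omin_mem _ _, fun _ hu => omin_le hu⟩

theorem isOpen_Iic' (a : WithTop β) : IsOpen (Iic a) := by
  rcases eq_or_ne a ⊤ with rfl | ha
  · simp only [Iic_top]; exact isOpen_univ
  · rcases (Ioi a).eq_empty_or_nonempty with he | hne
    · have : Iic a = univ := by
        ext z; simp only [mem_Iic, mem_univ, iff_true]
        by_contra h
        exact (eq_empty_iff_forall_notMem.1 he) z (lt_of_not_ge h)
      rw [this]; exact isOpen_univ
    · have : Iic a = Iio (omin (Ioi a) hne) := by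
        ext z
        constructor
        · intro hz; exact lt_of_le_of_lt hz (mem_Ioi.1 (omin_mem (Ioi a) hne))
        · intro hz
          by_contra h
          exact absurd (omin_le (mem_Ioi.2 (lt_of_not_ge h)) : omin (Ioi a) hne ≤ z) (not_le.2 hz)
      rw [this]; exact isOpen_Iio

theorem isOpen_lowerSet' {N : Set (WithTop β)} (h : ∀ x ∈ N, ∀ y, y ≤ x → y ∈ N) :
    IsOpen N := by
  have : N = ⋃ x ∈ N, Iic x := by
    ext z; simp only [mem_iUnion, mem_Iic, exists_prop]
    exact ⟨fun hz => ⟨z, hz, le_rfl⟩, fun ⟨x, hx, hzx⟩ => h x hx z hzx⟩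
  rw [this]
  exact isOpen_biUnion fun x _ => isOpen_Iic' x

/-- Key continuity criterion: a monotone map preserving sups at internal limits is continuous. -/
theorem cont_of_mono {γ : Type*} [LinearOrder γ] (g : WithTop β → WithTop γ)
    (mono : Monotone g)
    (hlub : ∀ a : WithTop β, (Iio a).Nonempty → IsLUB (Iio a) a → IsLUB (g '' Iio a) (g a)) :
    Continuous g := by
  rw [show (withTopOrderTopology : TopologicalSpace (WithTop γ)) =
    generateFrom { s : Set (WithTop γ) | ∃ a, s = {b | a < b} ∨ s = {b | b < a} } from rfl]
  rw [continuous_generateFrom_iff]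
  rintro s ⟨b, hb | hb⟩
  · subst hb
    -- preimage of Ioi b, an upper set
    rcases (g ⁻¹' {c | b < c}).eq_empty_or_nonempty with he | hne
    · rw [he]; exact isOpen_empty
    · have hup : ∀ x ∈ g ⁻¹' {c | b < c}, ∀ y, x ≤ y → y ∈ g ⁻¹' {c | b < c} :=
        fun x hx y hxy => lt_of_lt_of_le hx (mono hxy)
      set m := omin _ hne with hm
      have hmem : m ∈ g ⁻¹' {c | b < c} := omin_mem _ hne
      have hIci : g ⁻¹' {c | b < c} = Ici m := by
        ext z
        exact ⟨fun hz => omin_le hz, fun hz => hup m hmem z hz⟩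
      rw [hIci]
      rcases (Iio m).eq_empty_or_nonempty with he2 | hne2
      · have : Ici m = univ := by
          ext z; simp only [mem_Ici, mem_univ, iff_true]
          by_contra h
          exact (eq_empty_iff_forall_notMem.1 he2) z (lt_of_not_ge h)
        rw [this]; exact isOpen_univ
      · by_cases hmax : ∃ c ∈ Iio m, ∀ y ∈ Iio m, y ≤ c
        · obtain ⟨c, hc, hcmax⟩ := hmax
          have : Ici m = Ioi c := by
            ext z
            constructor
            · intro hz; exact lt_of_lt_of_le (mem_Iio.1 hc) (mem_Ici.1 hz)
            · intro hz
              by_contra h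
              exact absurd (hcmax z (mem_Iio.2 (lt_of_not_ge h))) (not_le.2 hz)
          rw [this]; exact isOpen_Ioi
        · exfalso
          push_neg at hmax
          have hlub' : IsLUB (Iio m) m := by
            refine ⟨fun y hy => le_of_lt hy, fun u hu => ?_⟩
            by_contra h
            obtain ⟨y, hy, hy2⟩ := hmax u (lt_of_not_ge h)
            exact absurd (hu hy) (not_le.2 hy2)
          have := hlub m hne2 hlub'
          -- g m > b but g m is lub of g '' Iio m, all ≤ b
          have hub : b ∈ upperBounds (g '' Iio m) := by
            rintro y ⟨w, hw, rfl⟩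
            by_contra h
            have : w ∈ g ⁻¹' {c | b < c} := lt_of_not_ge h
            exact absurd (omin_le this : m ≤ w) (not_le.2 hw)
          exact absurd (this.2 hub) (not_le.2 hmem)
  · subst hb
    exact isOpen_lowerSet' fun x hx y hyx => lt_of_le_of_lt (mono hyx) hx

/-- Closure characterization. -/
theorem mem_closure_iff_lub {T : Set (WithTop β)} {p : WithTop β} :
    p ∈ closure T ↔ p ∈ T ∨ ((T ∩ Iio p).Nonempty ∧ IsLUB (T ∩ Iio p) p) := by
  constructor
  · intro hp
    by_cases hpT : p ∈ T
    · exact Or.inl hpT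
    · right
      have h1 : (T ∩ Iio p).Nonempty := by
        rcases (mem_closure_iff.1 hp) (Iic p) (isOpen_Iic' p) (mem_Iic.2 le_rfl) with ⟨t, ht, htT⟩
        exact ⟨t, htT, mem_Iio.2 (lt_of_le_of_ne (mem_Iic.1 ht) (fun (h : t = p) => hpT (by rwa [h] at htT)))⟩
      refine ⟨h1, ⟨fun y hy => le_of_lt hy.2, fun u hu => ?_⟩⟩
      by_contra h
      push_neg at h
      rcases (mem_closure_iff.1 hp) (Ioi u ∩ Iic p)
        ((isOpen_Ioi).inter (isOpen_Iic' p)) ⟨mem_Ioi.2 h, mem_Iic.2 le_rfl⟩ with ⟨t, ⟨htu, htp⟩, htT⟩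
      have htp' : t < p := lt_of_le_of_ne (mem_Iic.1 htp) (fun (h2 : t = p) => hpT (by rwa [h2] at htT))
      exact absurd (hu ⟨htT, htp'⟩) (not_le.2 htu)
  · rintro (hp | ⟨hne, hlub⟩)
    · exact subset_closure hp
    · exact closure_mono (inter_subset_left) (hlub.mem_closure hne)

/-- Compactness. -/
theorem wtop_compact : CompactSpace (WithTop β) := by
  refine ⟨isCompact_iff_ultrafilter_le_nhds.2 fun F _ => ?_⟩
  have hne : {a : WithTop β | Iic a ∈ F}.Nonempty := ⟨⊤, by rw [mem_setOf_eq, Iic_top]; exact Filter.univ_mem⟩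
  set a := omin _ hne with ha
  refine ⟨a, mem_univ _, ?_⟩
  have huniv : (univ : Set (WithTop β)) ∈ F := Filter.univ_mem
  have hmem : Iic a ∈ F := omin_mem _ hne
  rw [show (withTopOrderTopology : TopologicalSpace (WithTop β)) =
    generateFrom { s : Set (WithTop β) | ∃ c, s = {b | c < b} ∨ s = {b | b < c} } from rfl]
  rw [nhds_generateFrom]
  refine le_iInf fun s => le_iInf ?_
  rintro ⟨has, c, rfl | rfl⟩
  all_goals simp only [mem_setOf_eq] at has
  · -- s = Ioi c, a ∈ s
    have hIic : Iic c ∉ F := by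
      intro h
      exact absurd (omin_le h : a ≤ c) (not_le.2 has)
    have : (Iic c)ᶜ ∈ F := Ultrafilter.compl_mem_iff_notMem.2 hIic
    refine Filter.le_principal_iff.2 (F.mem_of_superset this ?_)
    intro z hz
    exact (show c < z from lt_of_not_ge fun h' => hz (mem_Iic.2 h'))
  · refine Filter.le_principal_iff.2 (F.mem_of_superset hmem ?_)
    intro z hz
    exact (show z < c from lt_of_le_of_lt hz has)


end Gen19

section Pregood19
variable {J : Type*} [LinearOrder J] [WellFoundedLT J]

def someimg (S : Set J) : Set (WithTop J) := (fun j : J => (j : WithTop J)) '' S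

def Pregood (T : Set (WithTop J)) (ℓ : WithTop J) : Prop :=
  T.Nonempty ∧ (∀ t ∈ T, t < ℓ) ∧ (∀ c < ℓ, ∃ t ∈ T, c < t) ∧
  (∀ p, p < ℓ → (T ∩ Iio p).Nonempty → IsLUB (T ∩ Iio p) p → p ∈ T)

theorem Pregood.isLUB {T : Set (WithTop J)} {ℓ : WithTop J} (h : Pregood T ℓ) : IsLUB T ℓ := by
  refine ⟨fun t ht => le_of_lt (h.2.1 t ht), fun u hu => ?_⟩
  by_contra hc
  obtain ⟨t, ht, htu⟩ := h.2.2.1 u (lt_of_not_ge hc)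
  exact absurd (hu ht) (not_le.2 htu)

theorem pregood_of_almostClosedIn {T : Set (WithTop J)} (h : AlmostClosedIn T) :
    ∃ ℓ, Pregood T ℓ := by
  obtain ⟨ℓ, hcl, hleast⟩ := h
  have hlt : ∀ t ∈ T, t < ℓ := hleast.1
  have hℓc : ℓ ∈ closure T ∧ ℓ ∉ T := by
    have : ℓ ∈ closure T \ T := hcl ▸ rfl
    exact ⟨this.1, this.2⟩
  refine ⟨ℓ, ?_, hlt, ?_, ?_⟩
  · rcases T.eq_empty_or_nonempty with rfl | hne
    · exfalso
      rw [closure_empty] at hcl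
      simp only [diff_empty] at hcl
      exact absurd (hcl ▸ rfl : ℓ ∈ (∅ : Set (WithTop J))) (notMem_empty ℓ)
    · exact hne
  · intro c hc
    by_contra hcon
    push_neg at hcon
    rcases mem_closure_iff_lub.1 hℓc.1 with hmem | ⟨_, hlub⟩
    · exact hℓc.2 hmem
    · have : c ∈ upperBounds (T ∩ Iio ℓ) := fun t ht => hcon t ht.1
      exact absurd (hlub.2 this) (not_le.2 hc)
  · intro p hp hne hlub
    have : p ∈ closure T := mem_closure_iff_lub.2 (Or.inr ⟨⟨hne.some, hne.some_mem⟩, hlub⟩)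
    by_contra hpT
    have : p ∈ closure T \ T := ⟨this, hpT⟩
    rw [hcl] at this
    exact absurd (this : p = ℓ) (ne_of_lt hp)

theorem almostClosedIn_of_pregood {T : Set (WithTop J)} {ℓ : WithTop J} (h : Pregood T ℓ) :
    AlmostClosedIn T := by
  obtain ⟨hne, hlt, hdens, habs⟩ := h
  have hℓT : ℓ ∉ T := fun hmem => absurd (hlt ℓ hmem) (lt_irrefl ℓ)
  have hTIio : T ∩ Iio ℓ = T := by
    ext t; exact ⟨fun ht => ht.1, fun ht => ⟨ht, hlt t ht⟩⟩
  have hlubT : IsLUB (T ∩ Iio ℓ) ℓ := by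
    rw [hTIio]
    exact Pregood.isLUB ⟨hne, hlt, hdens, habs⟩
  refine ⟨ℓ, ?_, ⟨hlt, fun s hs => ?_⟩⟩
  · ext p
    constructor
    · rintro ⟨hpc, hpT⟩
      rcases mem_closure_iff_lub.1 hpc with hmem | ⟨hne', hlub'⟩
      · exact absurd hmem hpT
      · have hpℓ : p ≤ ℓ := hlub'.2 (fun t ht => le_of_lt (hlt t ht.1))
        rcases lt_or_eq_of_le hpℓ with hplt | rfl
        · exact absurd (habs p hplt hne' hlub') hpT
        · rfl
    · rintro rfl
      refine ⟨mem_closure_iff_lub.2 (Or.inr ⟨?_, hlubT⟩), hℓT⟩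
      rw [hTIio]; exact hne
  · by_contra hc
    obtain ⟨t, ht, hts⟩ := hdens s (lt_of_not_ge hc)
    exact absurd (hs t ht) (not_lt.2 (le_of_lt hts))

theorem almostClosed_iff_pregood {S : Set J} :
    AlmostClosed S ↔ ∃ ℓ, Pregood (someimg S) ℓ :=
  ⟨pregood_of_almostClosedIn, fun ⟨_, h⟩ => almostClosedIn_of_pregood h⟩

theorem AlmostClosed.nonempty {S : Set J} (h : AlmostClosed S) : Nonempty ↥S := by
  obtain ⟨ℓ, hne, _⟩ := almostClosed_iff_pregood.1 h
  obtain ⟨x, ⟨j, hj, rfl⟩⟩ := hne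
  exact ⟨⟨j, hj⟩⟩

theorem AlmostClosed.exists_gt {S : Set J} (h : AlmostClosed S) (z : ↥S) :
    ∃ z' : ↥S, z < z' := by
  obtain ⟨ℓ, hg⟩ := almostClosed_iff_pregood.1 h
  have hz : ((z : J) : WithTop J) < ℓ := hg.2.1 _ ⟨z, z.2, rfl⟩
  obtain ⟨t, ⟨j, hj, rfl⟩, hlt⟩ := hg.2.2.1 _ hz
  refine ⟨⟨j, hj⟩, ?_⟩
  have h2 : ((z : J) : WithTop J) < ((j : J) : WithTop J) := hlt
  exact Subtype.mk_lt_mk.2 (WithTop.coe_lt_coe.1 h2)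


end Pregood19

section Glue19
variable {J : Type*} [LinearOrder J] [WellFoundedLT J]


/-- The canonical J-valuation on `WithTop ↥I'`, sending `⊤` to `ℓ`. -/
noncomputable def jval {I' : Set J} (ℓ : WithTop J) : WithTop ↥I' → WithTop J :=
  WithTop.recTopCoe ℓ (fun w => ((w : J) : WithTop J))

theorem jval_strictMono {I' : Set J} {ℓ : WithTop J} (hg : Pregood (someimg I') ℓ) :
    StrictMono (jval (I' := I') ℓ) := by
  intro a b hab
  induction a using WithTop.recTopCoe with
  | top => exact absurd hab (not_lt.2 le_top)
  | coe w =>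
    induction b using WithTop.recTopCoe with
    | top =>
      exact hg.2.1 _ ⟨(w : J), w.2, rfl⟩
    | coe w' =>
      have : (w : J) < (w' : J) := Subtype.coe_lt_coe.2 (WithTop.coe_lt_coe.1 hab)
      exact WithTop.coe_lt_coe.2 this

theorem glue {I' : Set J} (hI' : AlmostClosed I')
    (D : Set (WithTop ↥I')) (p : WithTop ↥I')
    (hD0 : D.Nonempty) (hD1 : ∀ d ∈ D, d < p) (hD2 : IsLUB D p)
    (hD4 : ∀ q, q < p → (D ∩ Iio q).Nonempty → IsLUB (D ∩ Iio q) q → q ∈ D) :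
    ∃ S : Set J, AlmostClosed S ∧ ∃ e : WithTop ↥S → WithTop ↥I',
      Continuous e ∧ e ⊤ = p ∧ (∀ w : ↥S, e (WithTop.some w) ∈ D) ∧
      (∀ d ∈ D, ∃ w : ↥S, e (WithTop.some w) = d) ∧ StrictMono e ∧
      (∀ a : WithTop ↥S, (Iio a).Nonempty → IsLUB (Iio a) a →
        (D ∩ Iio (e a)).Nonempty ∧ IsLUB (D ∩ Iio (e a)) (e a)) := by
  obtain ⟨ℓ', hg⟩ := almostClosed_iff_pregood.1 hI'
  set jv : WithTop ↥I' → WithTop J := jval ℓ' with hjv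
  have jvsm : StrictMono jv := jval_strictMono hg
  -- elements of D are not ⊤
  have hDval : ∀ d ∈ D, ∃ δ : ↥I', d = WithTop.some δ := by
    intro d hd
    induction d using WithTop.recTopCoe with
    | top => exact absurd (lt_of_lt_of_le (hD1 _ hd) le_top) (lt_irrefl _)
    | coe δ => exact ⟨δ, rfl⟩
  classical
  set S : Set J := {j : J | ∃ h : j ∈ I', WithTop.some (⟨j, h⟩ : ↥I') ∈ D} with hS
  set pJ : WithTop J := jv p with hpJ
  have hpJle : pJ ≤ ℓ' := by
    induction p using WithTop.recTopCoe with
    | top => exact le_rfl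
    | coe w => exact le_of_lt (hg.2.1 _ ⟨(w : J), w.2, rfl⟩)
  -- membership translation
  have hSmem : ∀ x : WithTop J, x ∈ someimg S ↔ ∃ d ∈ D, jv d = x := by
    intro x
    constructor
    · rintro ⟨j, ⟨hjI, hjD⟩, rfl⟩
      exact ⟨WithTop.some ⟨j, hjI⟩, hjD, rfl⟩
    · rintro ⟨d, hd, rfl⟩
      obtain ⟨δ, rfl⟩ := hDval d hd
      refine ⟨(δ : J), ⟨δ.2, ?_⟩, rfl⟩
      have : (⟨(δ : J), δ.2⟩ : ↥I') = δ := Subtype.ext rfl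
      rw [this]; exact hd
  -- jv of D-elements < pJ
  have hDlt : ∀ d ∈ D, jv d < pJ := fun d hd => jvsm (hD1 d hd)
  -- Pregood (someimg S) pJ
  have hgS : Pregood (someimg S) pJ := by
    refine ⟨?_, ?_, ?_, ?_⟩
    · obtain ⟨d, hd⟩ := hD0
      exact ⟨jv d, (hSmem _).2 ⟨d, hd, rfl⟩⟩
    · intro t ht
      obtain ⟨d, hd, rfl⟩ := (hSmem t).1 ht
      exact hDlt d hd
    · -- density below pJ
      intro c hc
      by_contra hcon
      push_neg at hcon
      -- all S-elements ≤ c; build an upper bound of D strictly below p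
      have hallle : ∀ d ∈ D, jv d ≤ c := by
        intro d hd
        exact le_of_not_gt (fun h => absurd (hcon _ ((hSmem _).2 ⟨d, hd, rfl⟩)) (not_le.2 h))
      set lam : WithTop J := olub (someimg S) with hlam
      have hlamle : lam ≤ c := by
        refine (isLUB_olub _).2 ?_
        rintro x hx
        obtain ⟨d, hd, rfl⟩ := (hSmem x).1 hx
        exact hallle d hd
      have hlamI : lam ∈ someimg I' := by
        by_cases hmem : lam ∈ someimg S
        · obtain ⟨j, hj, heq⟩ := hmem
          exact ⟨j, hj.1, heq⟩
        · -- lam is a non-attained lub of someimg S, absorption of I'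
          have hlamlt : lam < ℓ' := lt_of_le_of_lt hlamle (lt_of_lt_of_le hc hpJle)
          obtain ⟨d₀, hd₀⟩ := hD0
          have hd₀S : jv d₀ ∈ someimg S := (hSmem _).2 ⟨d₀, hd₀, rfl⟩
          have hd₀lt : jv d₀ < lam :=
            lt_of_le_of_ne ((isLUB_olub _).1 hd₀S) (fun h => hmem (h ▸ hd₀S))
          have hImemI : jv d₀ ∈ someimg I' ∩ Iio lam := by
            refine ⟨?_, hd₀lt⟩
            obtain ⟨δ, rfl⟩ := hDval d₀ hd₀
            exact ⟨(δ : J), δ.2, rfl⟩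
          refine hg.2.2.2 lam hlamlt ⟨_, hImemI⟩ ⟨?_, ?_⟩
          · rintro x ⟨_, hx2⟩
            exact le_of_lt hx2
          · intro u hu
            by_contra hunot
            have hult : u < lam := lt_of_not_ge hunot
            obtain ⟨x, hxS, hux, hxlam⟩ : ∃ x ∈ someimg S, u < x ∧ x < lam := by
              by_contra hno
              push_neg at hno
              have : u ∈ upperBounds (someimg S) := by
                intro x hx
                by_contra hnle
                have hxlt : x < lam :=
                  lt_of_le_of_ne ((isLUB_olub _).1 hx) (fun h => hmem (h ▸ hx))
                exact absurd hxlt (not_lt.2 (hno x hx (lt_of_not_ge hnle)))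
              exact absurd ((isLUB_olub _).2 this) (not_le.2 hult)
            have hxI : x ∈ someimg I' ∩ Iio lam := by
              obtain ⟨d, hd, rfl⟩ := (hSmem x).1 hxS
              obtain ⟨δ, rfl⟩ := hDval d hd
              exact ⟨⟨(δ : J), δ.2, rfl⟩, hxlam⟩
            exact absurd (hu hxI) (not_le.2 hux)
      -- now lam gives an upper bound of D strictly below p
      rcases hlamI with ⟨j₀, hj₀, hlameq⟩
      set v : ↥I' := ⟨j₀, hj₀⟩ with hv
      have hjvv : jv (WithTop.some v) = lam := hlameq
      have hvub : WithTop.some v ∈ upperBounds D := by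
        intro d hd
        have h1 : jv d ≤ lam := (isLUB_olub _).1 ((hSmem _).2 ⟨d, hd, rfl⟩)
        rw [← hjvv] at h1
        exact (jvsm.le_iff_le).1 h1
      have hvlt : WithTop.some v < p := by
        have : jv (WithTop.some v) < jv p := by
          rw [hjvv, ← hpJ]; exact lt_of_le_of_lt hlamle hc
        exact (jvsm.lt_iff_lt).1 this
      exact absurd (hD2.2 hvub) (not_le.2 hvlt)
    · -- absorption
      intro r hr hne hlub
      have hrℓ : r < ℓ' := lt_of_lt_of_le hr hpJle
      have hrI : r ∈ someimg I' := by
        by_cases hmem : r ∈ someimg S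
        · obtain ⟨j, hj, heq⟩ := hmem
          exact ⟨j, hj.1, heq⟩
        · refine hg.2.2.2 r hrℓ ?_ ⟨?_, ?_⟩
          · obtain ⟨x, hx1, hx2⟩ := hne
            obtain ⟨d, hd, rfl⟩ := (hSmem x).1 hx1
            obtain ⟨δ, rfl⟩ := hDval d hd
            exact ⟨_, ⟨(δ : J), δ.2, rfl⟩, hx2⟩
          · rintro x ⟨_, hx2⟩
            exact le_of_lt hx2
          · intro u hu
            by_contra hunot
            obtain ⟨x, ⟨hxS, hxr⟩, hux⟩ :
                ∃ x ∈ someimg S ∩ Iio r, u < x := by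
              by_contra hno
              push_neg at hno
              exact absurd (hlub.2 (fun x hx => hno x hx)) hunot
            obtain ⟨d, hd, rfl⟩ := (hSmem x).1 hxS
            obtain ⟨δ, rfl⟩ := hDval d hd
            exact absurd (hu ⟨⟨(δ : J), δ.2, rfl⟩, hxr⟩) (not_le.2 hux)
      rcases hrI with ⟨j₀, hj₀, hreq⟩
      set v : ↥I' := ⟨j₀, hj₀⟩ with hv
      have hjvv : jv (WithTop.some v) = r := hreq
      have hvlt : WithTop.some v < p := (jvsm.lt_iff_lt).1 (by rw [hjvv]; exact hr)
      have hvD : WithTop.some v ∈ D := by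
        refine hD4 _ hvlt ?_ ⟨?_, ?_⟩
        · obtain ⟨x, hx1, hx2⟩ := hne
          obtain ⟨d, hd, rfl⟩ := (hSmem x).1 hx1
          refine ⟨d, hd, ?_⟩
          have h3 : jv d < jv (WithTop.some v) := by rw [hjvv]; exact hx2
          exact (jvsm.lt_iff_lt).1 h3
        · rintro d ⟨_, hd2⟩
          exact le_of_lt hd2
        · intro u hu
          by_contra hunot
          have huv : u < WithTop.some v := lt_of_not_ge hunot
          have hjuv : jv u < r := by rw [← hjvv]; exact jvsm huv
          obtain ⟨x, ⟨hxS, hxr⟩, hux⟩ : ∃ x ∈ someimg S ∩ Iio r, jv u < x := by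
            by_contra hno
            push_neg at hno
            exact absurd (hlub.2 (fun x hx => hno x hx)) (not_le.2 hjuv)
          obtain ⟨d, hd, rfl⟩ := (hSmem x).1 hxS
          have hdv : d < WithTop.some v := (jvsm.lt_iff_lt).1 (by rw [hjvv]; exact hxr)
          have hud : u < d := (jvsm.lt_iff_lt).1 hux
          exact absurd (hu ⟨hd, hdv⟩) (not_le.2 hud)
      exact (hSmem r).2 ⟨WithTop.some v, hvD, hjvv⟩
  have hSac : AlmostClosed S := almostClosed_iff_pregood.2 ⟨pJ, hgS⟩
  -- lift and e
  have hlift : ∀ w : ↥S, ∃ δ : ↥I', (δ : J) = (w : J) ∧ WithTop.some δ ∈ D := by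
    intro w
    obtain ⟨h, hD⟩ := w.2
    exact ⟨⟨(w : J), h⟩, rfl, hD⟩
  choose lift hlift1 hlift2 using hlift
  set e : WithTop ↥S → WithTop ↥I' := WithTop.recTopCoe p (fun w => WithTop.some (lift w))
    with he
  have he_top : e ⊤ = p := rfl
  have he_coe : ∀ w : ↥S, e (WithTop.some w) = WithTop.some (lift w) := fun w => rfl
  have he_memD : ∀ w : ↥S, e (WithTop.some w) ∈ D := fun w => hlift2 w
  have hesm : StrictMono e := by
    intro a b hab
    induction a using WithTop.recTopCoe with
    | top => exact absurd hab (not_lt.2 le_top)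
    | coe w =>
      induction b using WithTop.recTopCoe with
      | top => exact hD1 _ (he_memD w)
      | coe w' =>
        have h1 : (w : J) < (w' : J) := Subtype.coe_lt_coe.2 (WithTop.coe_lt_coe.1 hab)
        have h2 : (lift w : J) < (lift w' : J) := by rw [hlift1, hlift1]; exact h1
        exact WithTop.coe_lt_coe.2 (Subtype.coe_lt_coe.1 h2)
  have hsurj : ∀ d ∈ D, ∃ w : ↥S, e (WithTop.some w) = d := by
    intro d hd
    obtain ⟨δ, rfl⟩ := hDval d hd
    have hmem : (δ : J) ∈ S := by
      refine ⟨δ.2, ?_⟩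
      have : (⟨(δ : J), δ.2⟩ : ↥I') = δ := Subtype.ext rfl
      rw [this]; exact hd
    refine ⟨⟨(δ : J), hmem⟩, ?_⟩
    rw [he_coe]
    congr 1
    exact Subtype.ext (hlift1 _)
  -- the lub transfer
  have helub : ∀ a : WithTop ↥S, (Iio a).Nonempty → IsLUB (Iio a) a →
      (D ∩ Iio (e a)).Nonempty ∧ IsLUB (D ∩ Iio (e a)) (e a) := by
    intro a hne hlub
    have hne' : (D ∩ Iio (e a)).Nonempty := by
      obtain ⟨b, hb⟩ := hne
      have hbne : b ≠ ⊤ := by rintro rfl; exact absurd (lt_of_lt_of_le (mem_Iio.1 hb) le_top) (lt_irrefl ⊤)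
      obtain ⟨w₀, rfl⟩ := WithTop.ne_top_iff_exists.1 hbne
      exact ⟨e (WithTop.some w₀), he_memD w₀, hesm hb⟩
    refine ⟨hne', ?_⟩
    induction a using WithTop.recTopCoe with
    | top =>
      rw [he_top]
      have : D ∩ Iio p = D := by
        ext d; exact ⟨fun h => h.1, fun h => ⟨h, hD1 d h⟩⟩
      rw [this]; exact hD2
    | coe t =>
      set q₀ := e (WithTop.some t) with hq₀
      refine ⟨fun d hd => le_of_lt hd.2, ?_⟩
      intro u hu
      by_contra halt
      have huq : u < q₀ := lt_of_not_ge halt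
      set lam := olub (D ∩ Iio q₀) with hlam
      have hlamu : lam ≤ u := (isLUB_olub _).2 hu
      have hlamq : lam < q₀ := lt_of_le_of_lt hlamu huq
      by_cases hlamD : lam ∈ D
      · obtain ⟨w₁, hw₁⟩ := hsurj lam hlamD
        have hub : WithTop.some w₁ ∈ upperBounds (Iio (WithTop.some t)) := by
          intro b hb
          have hbne : b ≠ ⊤ := by rintro rfl; exact absurd (lt_of_lt_of_le (mem_Iio.1 hb) le_top) (lt_irrefl ⊤)
          obtain ⟨w₀, rfl⟩ := WithTop.ne_top_iff_exists.1 hbne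
          have : e (WithTop.some w₀) ≤ lam :=
            (isLUB_olub _).1 ⟨he_memD w₀, hesm hb⟩
          rw [← hw₁] at this
          exact (hesm.le_iff_le).1 this
        have hlt : WithTop.some w₁ < WithTop.some t :=
          (hesm.lt_iff_lt).1 (by rw [hw₁]; exact hlamq)
        exact absurd (hlub.2 hub) (not_le.2 hlt)
      · have hseteq : D ∩ Iio lam = D ∩ Iio q₀ := by
          ext d
          simp only [mem_inter_iff, mem_Iio]
          constructor
          · rintro ⟨hd1, hd2⟩
            exact ⟨hd1, lt_trans hd2 hlamq⟩
          · rintro ⟨hd1, hd2⟩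
            refine ⟨hd1, lt_of_le_of_ne ((isLUB_olub _).1 ⟨hd1, mem_Iio.2 hd2⟩) ?_⟩
            intro h; exact hlamD (h ▸ hd1)
        have hlamp : lam < p := lt_trans hlamq (hD1 _ (he_memD t))
        refine hlamD (hD4 lam hlamp ?_ ?_)
        · rw [hseteq]; exact hne'
        · rw [hseteq]; exact isLUB_olub _
  -- continuity
  have hecont : Continuous e := by
    refine cont_of_mono e hesm.monotone ?_
    intro a hne hlub
    have himg : e '' Iio a = D ∩ Iio (e a) := by
      ext x
      constructor
      · rintro ⟨b, hb, rfl⟩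
        have hbne : b ≠ ⊤ := by rintro rfl; exact absurd (lt_of_lt_of_le (mem_Iio.1 hb) le_top) (lt_irrefl ⊤)
        obtain ⟨w₀, rfl⟩ := WithTop.ne_top_iff_exists.1 hbne
        exact ⟨he_memD w₀, hesm hb⟩
      · rintro ⟨hx1, hx2⟩
        obtain ⟨w, hw⟩ := hsurj x hx1
        refine ⟨WithTop.some w, ?_, hw⟩
        exact (hesm.lt_iff_lt).1 (by rw [hw]; exact hx2)
    rw [himg]
    exact (helub a hne hlub).2
  exact ⟨S, hSac, e, hecont, he_top, he_memD, hsurj, hesm, helub⟩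


end Glue19

section CloseOff19
variable {β : Type*} [LinearOrder β] [WellFoundedLT β]

def closeOffW (B : Set (WithTop β)) (p : WithTop β) : Set (WithTop β) :=
  B ∪ {q | q < p ∧ (B ∩ Iio q).Nonempty ∧ IsLUB (B ∩ Iio q) q}

theorem closeOffW_lt {B : Set (WithTop β)} {p : WithTop β} (hB1 : ∀ b ∈ B, b < p) :
    ∀ d ∈ closeOffW B p, d < p := by
  rintro d (hd | hd)
  · exact hB1 d hd
  · exact hd.1

theorem closeOffW_isLUB {B : Set (WithTop β)} {p : WithTop β} (hB1 : ∀ b ∈ B, b < p)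
    (hB2 : IsLUB B p) : IsLUB (closeOffW B p) p := by
  refine ⟨fun d hd => le_of_lt (closeOffW_lt hB1 d hd), fun u hu => ?_⟩
  exact hB2.2 (fun b hb => hu (Or.inl hb))

theorem closeOffW_absorb {B : Set (WithTop β)} {p : WithTop β} :
    ∀ q, q < p → (closeOffW B p ∩ Iio q).Nonempty → IsLUB (closeOffW B p ∩ Iio q) q →
      q ∈ closeOffW B p := by
  intro q hq hne hlub
  have hBq : (B ∩ Iio q).Nonempty := by
    obtain ⟨d, hd, hdq⟩ := hne
    rcases hd with hd | hd
    · exact ⟨d, hd, hdq⟩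
    · obtain ⟨b, hb, hbd⟩ := hd.2.1
      exact ⟨b, hb, mem_Iio.2 (lt_trans (mem_Iio.1 hbd) (mem_Iio.1 hdq))⟩
  refine Or.inr ⟨hq, hBq, ⟨fun b hb => le_of_lt hb.2, ?_⟩⟩
  intro u hu
  by_contra hc
  have huq : u < q := lt_of_not_ge hc
  obtain ⟨d, ⟨hdD, hdq⟩, hud⟩ : ∃ d ∈ closeOffW B p ∩ Iio q, u < d := by
    by_contra hno
    push_neg at hno
    exact absurd (hlub.2 (fun d hd => hno d hd)) hc
  rcases hdD with hd | hd
  · exact absurd (hu ⟨hd, hdq⟩) (not_le.2 hud)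
  · obtain ⟨b, ⟨hb, hbd⟩, hub⟩ : ∃ b ∈ B ∩ Iio d, u < b := by
      by_contra hno
      push_neg at hno
      exact absurd (hd.2.2.2 (fun b hb => hno b hb)) (not_le.2 hud)
    exact absurd (hu ⟨hb, mem_Iio.2 (lt_trans (mem_Iio.1 hbd) (mem_Iio.1 hdq))⟩) (not_le.2 hub)


end CloseOff19

section LemmaR19
variable {J : Type*} [LinearOrder J] [WellFoundedLT J]
variable {X : Type*} [TopologicalSpace X]

variable {J : Type*} [LinearOrder J] [WellFoundedLT J]
variable {X : Type*} [TopologicalSpace X]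

/-- Lemma R: a continuous map into a `J`-closed set on an unbounded set of indices sends
the relevant limit points (and `⊤`) into the set. -/
theorem lemmaR_aux {I' : Set J} (hI' : AlmostClosed I') {C : Set X}
    (hC : JClosedSet J X C) {f : WithTop ↥I' → X} (hf : Continuous f) :
    ∀ p : WithTop ↥I',
      ({q : WithTop ↥I' | q < ⊤ ∧ f q ∈ C} ∩ Iio p).Nonempty →
      IsLUB ({q : WithTop ↥I' | q < ⊤ ∧ f q ∈ C} ∩ Iio p) p → f p ∈ C := by
  set T : Set (WithTop ↥I') := {q | q < ⊤ ∧ f q ∈ C} with hT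
  intro p
  induction p using WellFoundedLT.induction with
  | ind p IH =>
    intro hne hlub
    set B : Set (WithTop ↥I') := T ∩ Iio p with hB
    set D : Set (WithTop ↥I') := closeOffW B p with hD
    have hB1 : ∀ b ∈ B, b < p := fun b hb => hb.2
    obtain ⟨S, hS, e, hecont, hetop, hememD, hesurj, hesm, helub⟩ :=
      glue hI' D p (hne.mono (subset_union_left)) (closeOffW_lt hB1)
        (closeOffW_isLUB hB1 hlub) (closeOffW_absorb)
    have hvals : ∀ w : ↥S, (f ∘ e) (WithTop.some w) ∈ C := by
      intro w
      rcases hememD w with hd | hd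
      · exact hd.1.2
      · -- limit point: apply IH
        have hqp : e (WithTop.some w) < p := hd.1
        have hsub : B ∩ Iio (e (WithTop.some w)) = T ∩ Iio (e (WithTop.some w)) := by
          rw [hB, inter_assoc]
          congr 1
          ext z
          simp only [mem_inter_iff, mem_Iio]
          exact ⟨fun h => h.2, fun h => ⟨lt_trans h hqp, h⟩⟩
        refine IH _ hqp ?_ ?_
        · rw [← hsub]; exact hd.2.1
        · rw [← hsub]; exact hd.2.2
    have := hC S hS (f ∘ e) (hf.comp hecont) hvals
    rwa [Function.comp_apply, hetop] at this

theorem lemmaR {I' : Set J} (hI' : AlmostClosed I') {C : Set X}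
    (hC : JClosedSet J X C) {f : WithTop ↥I' → X} (hf : Continuous f)
    (hub : ∀ u : ↥I', ∃ z : ↥I', u < z ∧ f (WithTop.some z) ∈ C) : f ⊤ ∈ C := by
  have hne : Nonempty ↥I' := hI'.nonempty
  obtain ⟨w₀⟩ := hne
  obtain ⟨z₀, hz₀, hz₀C⟩ := hub w₀
  refine lemmaR_aux hI' hC hf ⊤ ⟨WithTop.some z₀, ⟨?_, hz₀C⟩, ?_⟩ ⟨fun q _ => le_top, ?_⟩
  · exact WithTop.coe_lt_top _
  · exact WithTop.coe_lt_top _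
  · intro u hu
    by_contra hc
    have hult : u < ⊤ := lt_top_iff_ne_top.2 (fun h => hc (h ▸ le_rfl))
    obtain ⟨u₀, rfl⟩ := WithTop.ne_top_iff_exists.1 (lt_top_iff_ne_top.1 hult)
    obtain ⟨z, hz, hzC⟩ := hub u₀
    have : (WithTop.some z : WithTop ↥I') ≤ WithTop.some u₀ :=
      hu ⟨⟨WithTop.coe_lt_top _, hzC⟩, WithTop.coe_lt_top _⟩
    exact absurd (WithTop.coe_lt_coe.2 hz) (not_lt.2 this)

/-- Lemma A: if `f` takes the value `c` unboundedly often and `{c}` is closed,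
then `f ⊤ = c`. -/
theorem lemmaA {I' : Set J} (hI' : AlmostClosed I') {f : WithTop ↥I' → X}
    (hf : Continuous f) {c : X} (hc : IsClosed ({c} : Set X))
    (hP : ∀ u : ↥I', ∃ z : ↥I', u < z ∧ f (WithTop.some z) = c) : f ⊤ = c := by
  set P : Set (WithTop ↥I') := {q | q < ⊤ ∧ f q = c} with hPdef
  have htop : (⊤ : WithTop ↥I') ∈ closure P := by
    rw [mem_closure_iff_lub]
    right
    obtain ⟨w₀⟩ := hI'.nonempty
    obtain ⟨z₀, _, hz₀⟩ := hP w₀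
    have hz₀P : (WithTop.some z₀ : WithTop ↥I') ∈ P ∩ Iio ⊤ :=
      ⟨⟨WithTop.coe_lt_top _, hz₀⟩, WithTop.coe_lt_top _⟩
    refine ⟨⟨_, hz₀P⟩, ⟨fun q _ => le_top, ?_⟩⟩
    intro u hu
    by_contra hcon
    have hult : u < ⊤ := lt_top_iff_ne_top.2 (fun h => hcon (h ▸ le_rfl))
    obtain ⟨u₀, rfl⟩ := WithTop.ne_top_iff_exists.1 (lt_top_iff_ne_top.1 hult)
    obtain ⟨z, hz, hzc⟩ := hP u₀
    have : (WithTop.some z : WithTop ↥I') ≤ WithTop.some u₀ :=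
      hu ⟨⟨WithTop.coe_lt_top _, hzc⟩, WithTop.coe_lt_top _⟩
    exact absurd (WithTop.coe_lt_coe.2 hz) (not_lt.2 this)
  have h1 : f ⊤ ∈ f '' closure P := mem_image_of_mem f htop
  have h2 : f '' closure P ⊆ closure (f '' P) := image_closure_subset_closure_image hf
  have h3 : f '' P ⊆ {c} := by
    rintro x ⟨q, hq, rfl⟩
    exact hq.2
  have h4 : closure (f '' P) ⊆ {c} := by
    rw [← hc.closure_eq]
    exact closure_mono h3
  exact h4 (h2 h1)


end LemmaR19

section Kernel19
variable {J : Type*} [LinearOrder J] [WellFoundedLT J]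
variable {X : Type*} [TopologicalSpace X]

variable {J : Type*} [LinearOrder J] [WellFoundedLT J]
variable {X : Type*} [TopologicalSpace X]

theorem olub_mono {β : Type*} [LinearOrder β] [WellFoundedLT β]
    {s t : Set (WithTop β)} (h : s ⊆ t) : olub s ≤ olub t :=
  (isLUB_olub s).2 (fun x hx => (isLUB_olub t).1 (h hx))

/-- The kernel induction: transfinite agreement via `J`-closedness of the diagonal. -/
theorem kernel {I₂ I₁ : Set J} (hI₂ : AlmostClosed I₂) (hI₁ : AlmostClosed I₁)
    {f : WithTop ↥I₁ → X} (hf : Continuous f) {h : WithTop ↥I₂ → X} (hh : Continuous h)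
    (hΔ : JClosedSet J (X × X) (Set.diagonal X))
    (A : Set (WithTop ↥I₂)) (μt : WithTop ↥I₂ → WithTop ↥I₁)
    (hAmono : ∀ a ∈ A, ∀ a' ∈ A, a < a' → μt a < μt a')
    (hAagree : ∀ a ∈ A, h a = f (μt a))
    (hAclean : ∀ a ∈ A, ¬((A ∩ Iio a).Nonempty ∧ IsLUB (A ∩ Iio a) a)) :
    ∀ p : WithTop ↥I₂, (A ∩ Iio p).Nonempty → IsLUB (A ∩ Iio p) p →
      h p = f (olub (μt '' (A ∩ Iio p))) := by
  classical
  intro p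
  induction p using WellFoundedLT.induction with
  | ind p IH =>
    intro hne hlub
    set B : Set (WithTop ↥I₂) := A ∩ Iio p with hB
    set D : Set (WithTop ↥I₂) := closeOffW B p with hD
    have hB1 : ∀ b ∈ B, b < p := fun b hb => hb.2
    -- for q < p we have B ∩ Iio q = A ∩ Iio q
    have hBA : ∀ q, q < p → B ∩ Iio q = A ∩ Iio q := by
      intro q hq
      rw [hB, inter_assoc]
      congr 1
      ext z
      simp only [mem_inter_iff, mem_Iio]
      exact ⟨fun h => h.2, fun h => ⟨lt_trans h hq, h⟩⟩
    obtain ⟨S, hS, e, hecont, hetop, hememD, hesurj, hesm, helub⟩ :=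
      glue hI₂ D p (hne.mono (subset_union_left)) (closeOffW_lt hB1)
        (closeOffW_isLUB hB1 hlub) (closeOffW_absorb)
    -- limit points of D are not in B (else hAclean is violated)
    have hlimB : ∀ q, (D ∩ Iio q).Nonempty → IsLUB (D ∩ Iio q) q → q ∉ B := by
      intro q hne' hlub' hqB
      refine hAclean q hqB.1 ⟨?_, ⟨fun a ha => le_of_lt ha.2, ?_⟩⟩
      · obtain ⟨d, hd, hdq⟩ := hne'
        rcases hd with hd | hd
        · exact ⟨d, hd.1, hdq⟩
        · obtain ⟨b, hb, hbd⟩ := hd.2.1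
          exact ⟨b, hb.1, mem_Iio.2 (lt_trans (mem_Iio.1 hbd) (mem_Iio.1 hdq))⟩
      · intro u hu
        refine hlub'.2 ?_
        rintro d ⟨hdD, hdq⟩
        rcases hdD with hd | hd
        · exact hu ⟨hd.1, hdq⟩
        · refine hd.2.2.2 ?_
          rintro b ⟨hbB, hbd⟩
          exact hu ⟨hbB.1, mem_Iio.2 (lt_trans (mem_Iio.1 hbd) (mem_Iio.1 hdq))⟩
    -- the G map
    set G : WithTop ↥S → WithTop ↥I₁ := fun z =>
      if e z ∈ B then μt (e z) else olub (μt '' (B ∩ Iio (e z))) with hG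
    have hGofB : ∀ z, e z ∈ B → G z = μt (e z) := by
      intro z hz; rw [hG]; simp only [if_pos hz]
    have hGnotB : ∀ z, e z ∉ B → G z = olub (μt '' (B ∩ Iio (e z))) := by
      intro z hz; rw [hG]; simp only [if_neg hz]
    have hpB : p ∉ B := fun hp => absurd hp.2 (lt_irrefl p)
    -- G is monotone
    have hGmono : Monotone G := by
      intro z z' hzz'
      rcases eq_or_lt_of_le hzz' with rfl | hlt
      · exact le_rfl
      have heq : e z < e z' := hesm hlt
      by_cases h1 : e z ∈ B <;> by_cases h2 : e z' ∈ B
      · rw [hGofB z h1, hGofB z' h2]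
        exact le_of_lt (hAmono _ h1.1 _ h2.1 heq)
      · rw [hGofB z h1, hGnotB z' h2]
        exact (isLUB_olub _).1 ⟨e z, ⟨h1, heq⟩, rfl⟩
      · rw [hGnotB z h1, hGofB z' h2]
        refine (isLUB_olub _).2 ?_
        rintro x ⟨b, ⟨hbB, hbz⟩, rfl⟩
        exact le_of_lt (hAmono _ hbB.1 _ h2.1 (lt_trans (mem_Iio.1 hbz) heq))
      · rw [hGnotB z h1, hGnotB z' h2]
        refine olub_mono (image_mono ?_)
        exact inter_subset_inter_right _ (Iio_subset_Iio (le_of_lt heq))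
    -- G satisfies the lub condition
    have hGlub : ∀ a : WithTop ↥S, (Iio a).Nonempty → IsLUB (Iio a) a →
        IsLUB (G '' Iio a) (G a) := by
      intro a hane halub
      obtain ⟨hDne, hDlub⟩ := helub a hane halub
      have haB : e a ∉ B := hlimB _ hDne hDlub
      constructor
      · rintro x ⟨w, hw, rfl⟩
        exact hGmono (le_of_lt (mem_Iio.1 hw))
      · intro u hu
        rw [hGnotB a haB]
        refine (isLUB_olub _).2 ?_
        rintro x ⟨b, ⟨hbB, hbe⟩, rfl⟩
        obtain ⟨w, hw⟩ := hesurj b (Or.inl hbB)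
        have hwa : WithTop.some w < a := by
          rw [← hesm.lt_iff_lt, hw]
          exact hbe
        have : G (WithTop.some w) = μt b := by rw [hGofB _ (hw ▸ hbB : e _ ∈ B)]; rw [hw]
        rw [← this]
        exact hu ⟨WithTop.some w, hwa, rfl⟩
    have hGcont : Continuous G := cont_of_mono G hGmono hGlub
    -- the pair map
    set Ψ : WithTop ↥S → X × X := fun z => (h (e z), f (G z)) with hΨ
    have hΨcont : Continuous Ψ := ((hh.comp hecont).prodMk (hf.comp hGcont))
    have hΨvals : ∀ w : ↥S, Ψ (WithTop.some w) ∈ Set.diagonal X := by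
      intro w
      by_cases hwB : e (WithTop.some w) ∈ B
      · show h (e (WithTop.some w)) = f (G (WithTop.some w))
        rw [hGofB _ hwB]
        exact hAagree _ hwB.1
      · -- limit point case: use IH
        have hwD := hememD w
        rcases hwD with hwD | hwD
        · exact absurd hwD hwB
        · obtain ⟨hlt, hne', hlub'⟩ := hwD
          show h (e (WithTop.some w)) = f (G (WithTop.some w))
          rw [hGnotB _ hwB, hBA _ hlt]
          refine IH _ hlt ?_ ?_
          · rw [← hBA _ hlt]; exact hne'
          · rw [← hBA _ hlt]; exact hlub'
    have := hΔ S hS Ψ hΨcont hΨvals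
    have hfin : h (e ⊤) = f (G ⊤) := this
    rw [hetop] at hfin
    rw [hfin, hGnotB ⊤ (by rw [hetop]; exact hpB), hetop]
    congr 2
    rw [hB, inter_assoc, inter_self]

end Kernel19

section LemmaC19
variable {J : Type*} [LinearOrder J] [WellFoundedLT J]
variable {X : Type*} [TopologicalSpace X]

variable {J : Type*} [LinearOrder J] [WellFoundedLT J]
variable {X : Type*} [TopologicalSpace X]

noncomputable def wmin {α : Type*} [LT α] [WellFoundedLT α] (T : Set α) (h : T.Nonempty) : α :=
  (IsWellFounded.wf (r := ((· < ·) : α → α → Prop))).min T h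
theorem wmin_mem {α : Type*} [LT α] [WellFoundedLT α] (T : Set α) (h : T.Nonempty) :
    wmin T h ∈ T := WellFounded.min_mem _ T h
theorem wmin_le {α : Type*} [LinearOrder α] [WellFoundedLT α] {T : Set α} {h : T.Nonempty}
    {x : α} (hx : x ∈ T) : wmin T h ≤ x :=
  le_of_not_gt (WellFounded.not_lt_min _ T hx)

theorem lemmaC' (hT1 : ∀ x : X, IsClosed ({x} : Set X))
    (hΔ : JClosedSet J (X × X) (Set.diagonal X))
    {I₁ I₂ : Set J} (hI₁ : AlmostClosed I₁) (hI₂ : AlmostClosed I₂)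
    {f : WithTop ↥I₁ → X} (hf : Continuous f) {h : WithTop ↥I₂ → X} (hh : Continuous h)
    (hsub : ∀ z : ↥I₂, h (WithTop.some z) ∈ Set.range f) : h ⊤ ∈ Set.range f := by
  classical
  have hfib : ∀ z : ↥I₂, {w : WithTop ↥I₁ | f w = h (WithTop.some z)}.Nonempty := by
    intro z; obtain ⟨w, hw⟩ := hsub z; exact ⟨w, hw⟩
  set μ : ↥I₂ → WithTop ↥I₁ := fun z => wmin _ (hfib z) with hμ
  have hμf : ∀ z, f (μ z) = h (WithTop.some z) := fun z => wmin_mem _ (hfib z)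
  set MS : Set (WithTop ↥I₁) := {a | ∀ u : ↥I₂, ∃ z : ↥I₂, u < z ∧ μ z ≤ a} with hMS
  have hMSne : MS.Nonempty := by
    refine ⟨⊤, fun u => ?_⟩
    obtain ⟨z, hz⟩ := hI₂.exists_gt u
    exact ⟨z, hz, le_top⟩
  set a0 : WithTop ↥I₁ := wmin MS hMSne with ha0
  have ha0mem : ∀ u : ↥I₂, ∃ z : ↥I₂, u < z ∧ μ z ≤ a0 := wmin_mem MS hMSne
  have hbdd : ∀ b, b < a0 → ∃ u : ↥I₂, ∀ z : ↥I₂, u < z → b < μ z := by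
    intro b hb
    have hb' : b ∉ MS := fun hb' => absurd (wmin_le hb') (not_le.2 hb)
    rw [hMS, mem_setOf_eq] at hb'
    push_neg at hb'
    obtain ⟨u, hu⟩ := hb'
    exact ⟨u, fun z hz => hu z hz⟩
  by_cases hcaseA : ∀ u : ↥I₂, ∃ z : ↥I₂, u < z ∧ μ z = a0
  · refine ⟨a0, (lemmaA hI₂ hh (hT1 (f a0)) ?_).symm⟩
    intro u
    obtain ⟨z, hz, hze⟩ := hcaseA u
    exact ⟨z, hz, by rw [← hμf z, hze]⟩
  · push_neg at hcaseA
    obtain ⟨ζ, hζ⟩ := hcaseA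
    have hreach : ∀ b : WithTop ↥I₁, b < a0 → ∀ u : ↥I₂, ∃ z : ↥I₂,
        u < z ∧ b < μ z ∧ μ z < a0 := by
      intro b hb u
      obtain ⟨ub, hub⟩ := hbdd b hb
      obtain ⟨v, hv⟩ := hI₂.exists_gt (max (max u ζ) ub)
      obtain ⟨z, hvz, hza⟩ := ha0mem v
      have hzu : u < z :=
        lt_trans (lt_of_le_of_lt ((le_max_left u ζ).trans (le_max_left _ ub)) hv) hvz
      have hzζ : ζ < z :=
        lt_trans (lt_of_le_of_lt ((le_max_right u ζ).trans (le_max_left _ ub)) hv) hvz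
      have hzub : ub < z := lt_trans (lt_of_le_of_lt (le_max_right _ ub) hv) hvz
      exact ⟨z, hzu, hub z hzub, lt_of_le_of_ne hza (hζ z hzζ)⟩
    set μt : WithTop ↥I₂ → WithTop ↥I₁ := WithTop.recTopCoe ⊤ μ with hμt
    set Rec : ↥I₂ → Set (WithTop ↥I₂) := fun zb => {q | ∃ z : ↥I₂, q = WithTop.some z ∧ zb < z ∧
      μ z < a0 ∧ ∀ w : ↥I₂, zb < w → w < z → μ w < a0 → μ w < μ z} with hRec
    have hRlt : ∀ zb, ∀ q ∈ Rec zb, q < ⊤ := by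
      rintro zb q ⟨z, rfl, _⟩
      exact WithTop.coe_lt_top _
    have hRgt : ∀ zb : ↥I₂, ∀ q ∈ Rec zb, (WithTop.some zb : WithTop ↥I₂) < q := by
      rintro zb q ⟨z, rfl, hz, _⟩
      exact WithTop.coe_lt_coe.2 hz
    have hRmono : ∀ zb, ∀ q ∈ Rec zb, ∀ q' ∈ Rec zb, q < q' → μt q < μt q' := by
      rintro zb q ⟨z, rfl, hz1, hz2, _⟩ q' ⟨z', rfl, hz1', hz2', hz3'⟩ hqq'
      exact hz3' z hz1 (WithTop.coe_lt_coe.1 hqq') hz2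
    have hRμlt : ∀ zb, ∀ q ∈ Rec zb, μt q < a0 := by
      rintro zb q ⟨z, rfl, _, hz2, _⟩
      exact hz2
    have hRagree : ∀ zb, ∀ q ∈ Rec zb, h q = f (μt q) := by
      rintro zb q ⟨z, rfl, _⟩
      exact (hμf z).symm
    have hRabove : ∀ zb : ↥I₂, ∀ b : WithTop ↥I₁, b < a0 → ∃ q ∈ Rec zb, b < μt q := by
      intro zb b hb
      have hSET : {z : ↥I₂ | zb < z ∧ b < μ z ∧ μ z < a0}.Nonempty := by
        obtain ⟨z, h1, h2, h3⟩ := hreach b hb zb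
        exact ⟨z, h1, h2, h3⟩
      set zs := wmin _ hSET with hzs
      have hmem : zs ∈ {z : ↥I₂ | zb < z ∧ b < μ z ∧ μ z < a0} := wmin_mem _ hSET
      refine ⟨WithTop.some zs, ⟨zs, rfl, hmem.1, hmem.2.2, ?_⟩, hmem.2.1⟩
      intro w hw1 hw2 hw3
      by_contra hc
      have hwmem : w ∈ {z : ↥I₂ | zb < z ∧ b < μ z ∧ μ z < a0} :=
        ⟨hw1, lt_of_lt_of_le hmem.2.1 (le_of_not_gt hc), hw3⟩
      exact absurd (wmin_le (h := hSET) hwmem) (not_le.2 hw2)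
    have hRne : ∀ zb : ↥I₂, (Rec zb).Nonempty := by
      intro zb
      have hSET : {z : ↥I₂ | zb < z ∧ μ z < a0}.Nonempty := by
        obtain ⟨v, hv⟩ := hI₂.exists_gt (max zb ζ)
        obtain ⟨z, hvz, hza⟩ := ha0mem v
        refine ⟨z, lt_trans (lt_of_le_of_lt (le_max_left _ _) hv) hvz,
          lt_of_le_of_ne hza (hζ z (lt_trans (lt_of_le_of_lt (le_max_right _ _) hv) hvz))⟩
      set zs := wmin _ hSET with hzs
      have hmem : zs ∈ {z : ↥I₂ | zb < z ∧ μ z < a0} := wmin_mem _ hSET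
      refine ⟨WithTop.some zs, zs, rfl, hmem.1, hmem.2, ?_⟩
      intro w hw1 hw2 hw3
      exact absurd (wmin_le (h := hSET) (⟨hw1, hw3⟩ : w ∈ {z : ↥I₂ | zb < z ∧ μ z < a0}))
        (not_le.2 hw2)
    have hRnomax : ∀ zb, ∀ q ∈ Rec zb, ∃ q' ∈ Rec zb, q < q' := by
      intro zb q hq
      obtain ⟨q', hq', hμq'⟩ := hRabove zb (μt q) (hRμlt zb q hq)
      refine ⟨q', hq', ?_⟩
      rcases lt_trichotomy q q' with hlt | rfl | hgt
      · exact hlt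
      · exact absurd hμq' (lt_irrefl _)
      · exact absurd (hRmono zb q' hq' q hq hgt) (not_lt.2 (le_of_lt hμq'))
    -- cleaned records
    set Acl : ↥I₂ → Set (WithTop ↥I₂) := fun zb => {q ∈ Rec zb |
      ¬((Rec zb ∩ Iio q).Nonempty ∧ IsLUB (Rec zb ∩ Iio q) q)} with hAcl
    have hAsub : ∀ zb, Acl zb ⊆ Rec zb := fun zb q hq => hq.1
    have hclean_above : ∀ zb, ∀ u : WithTop ↥I₂, (∃ q ∈ Rec zb, u < q) →
        ∃ q' ∈ Acl zb, u < q' := by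
      intro zb u hu
      have hTne : (Rec zb ∩ Ioi u).Nonempty := by
        obtain ⟨q, hq, huq⟩ := hu
        exact ⟨q, hq, huq⟩
      set q' := wmin _ hTne with hq'
      have hq'm : q' ∈ Rec zb ∩ Ioi u := wmin_mem _ hTne
      refine ⟨q', ⟨hq'm.1, ?_⟩, hq'm.2⟩
      rintro ⟨hne', hlub'⟩
      have hub : u ∈ upperBounds (Rec zb ∩ Iio q') := by
        rintro r ⟨hr1, hr2⟩
        by_contra hc
        exact absurd (wmin_le (h := hTne) (⟨hr1, lt_of_not_ge hc⟩ : r ∈ Rec zb ∩ Ioi u))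
          (not_le.2 (mem_Iio.1 hr2))
      exact absurd (hlub'.2 hub) (not_le.2 (mem_Ioi.1 hq'm.2))
    have hAclean : ∀ zb, ∀ q ∈ Acl zb, ¬((Acl zb ∩ Iio q).Nonempty ∧ IsLUB (Acl zb ∩ Iio q) q) := by
      rintro zb q hq ⟨hne', hlub'⟩
      refine hq.2 ⟨hne'.mono (inter_subset_inter_left _ (hAsub zb)), ?_, ?_⟩
      · rintro r ⟨_, hr2⟩
        exact le_of_lt (mem_Iio.1 hr2)
      · intro u hu
        exact hlub'.2 (fun r hr => hu ⟨hAsub zb hr.1, hr.2⟩)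
    have hAmono : ∀ zb, ∀ q ∈ Acl zb, ∀ q' ∈ Acl zb, q < q' → μt q < μt q' :=
      fun zb q hq q' hq' => hRmono zb q (hAsub zb hq) q' (hAsub zb hq')
    have hAagree : ∀ zb, ∀ q ∈ Acl zb, h q = f (μt q) :=
      fun zb q hq => hRagree zb q (hAsub zb hq)
    by_cases hsub2 : ∃ zb : ↥I₂, ∀ u : WithTop ↥I₂, u < ⊤ → ∃ q ∈ Rec zb, u < q
    · -- records unbounded: kernel at ⊤
      obtain ⟨zb, hzb⟩ := hsub2
      have hAub : ∀ u : WithTop ↥I₂, u < ⊤ → ∃ q ∈ Acl zb, u < q :=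
        fun u hu => hclean_above zb u (hzb u hu)
      obtain ⟨w₀⟩ := hI₂.nonempty
      obtain ⟨q₀, hq₀, hq₀gt⟩ := hAub (WithTop.some w₀) (WithTop.coe_lt_top _)
      have hne : (Acl zb ∩ Iio (⊤ : WithTop ↥I₂)).Nonempty :=
        ⟨q₀, hq₀, mem_Iio.2 (hRlt zb q₀ (hAsub zb hq₀))⟩
      have hlub : IsLUB (Acl zb ∩ Iio (⊤ : WithTop ↥I₂)) ⊤ := by
        refine ⟨fun q _ => le_top, fun u hu => ?_⟩
        by_contra hc
        have hult : u < ⊤ := lt_top_iff_ne_top.2 (fun hE => hc (hE ▸ le_rfl))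
        obtain ⟨q, hq, huq⟩ := hAub u hult
        exact absurd (hu ⟨hq, mem_Iio.2 (hRlt zb q (hAsub zb hq))⟩) (not_le.2 huq)
      have := kernel hI₂ hI₁ hf hh hΔ (Acl zb) μt (hAmono zb) (hAagree zb) (hAclean zb)
        ⊤ hne hlub
      exact ⟨_, this.symm⟩
    · -- records bounded for every zb
      push_neg at hsub2
      have hkey : ∀ zb : ↥I₂, ∃ v : ↥I₂, zb < v ∧ h (WithTop.some v) = f a0 := by
        intro zb
        obtain ⟨u, hult, hu⟩ := hsub2 zb
        -- Acl zb has no maximum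
        have hAnomax : ∀ q ∈ Acl zb, ∃ q' ∈ Acl zb, q < q' := by
          intro q hq
          exact hclean_above zb q (hRnomax zb q (hAsub zb hq))
        have hAne : (Acl zb).Nonempty := by
          obtain ⟨q, hq⟩ := hRne zb
          obtain ⟨q', hq', _⟩ := hclean_above zb (WithTop.some zb) ⟨q, hq, hRgt zb q hq⟩
          exact ⟨q', hq'⟩
        set lam := olub (Acl zb) with hlam
        have hlamle : lam ≤ u := (isLUB_olub _).2 (fun q hq => hu q (hAsub zb hq))
        have hlamlt : lam < ⊤ := lt_of_le_of_lt hlamle hult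
        have hlamnot : lam ∉ Acl zb := by
          intro hmem
          obtain ⟨q', hq', hlt⟩ := hAnomax lam hmem
          exact absurd ((isLUB_olub _).1 hq') (not_le.2 hlt)
        have hseteq : Acl zb ∩ Iio lam = Acl zb := by
          ext q
          refine ⟨fun hq => hq.1, fun hq => ⟨hq, mem_Iio.2 ?_⟩⟩
          exact lt_of_le_of_ne ((isLUB_olub _).1 hq) (fun hE => hlamnot (hE ▸ hq))
        have hne : (Acl zb ∩ Iio lam).Nonempty := by rw [hseteq]; exact hAne
        have hlub : IsLUB (Acl zb ∩ Iio lam) lam := by rw [hseteq]; exact isLUB_olub _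
        have hker := kernel hI₂ hI₁ hf hh hΔ (Acl zb) μt (hAmono zb) (hAagree zb)
          (hAclean zb) lam hne hlub
        -- olub of the μt-image is a0
        have himg : IsLUB (μt '' (Acl zb ∩ Iio lam)) a0 := by
          rw [hseteq]
          constructor
          · rintro x ⟨q, hq, rfl⟩
            exact le_of_lt (hRμlt zb q (hAsub zb hq))
          · intro b hb
            by_contra hc
            have hblt : b < a0 := lt_of_not_ge hc
            obtain ⟨q, hq, hbq⟩ := hRabove zb b hblt
            obtain ⟨r, hr, hqr⟩ := hRnomax zb q hq
            obtain ⟨q', hq', hqq'⟩ := hclean_above zb q ⟨r, hr, hqr⟩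
            have : μt q < μt q' := hRmono zb q hq q' (hAsub zb hq') hqq'
            exact absurd (hb ⟨q', hq', rfl⟩) (not_le.2 (lt_trans hbq this))
        have holub : olub (μt '' (Acl zb ∩ Iio lam)) = a0 :=
          (isLUB_olub _).unique himg
        rw [holub] at hker
        -- lam = some v with zb < v
        obtain ⟨v, hveq⟩ := WithTop.ne_top_iff_exists.1 (lt_top_iff_ne_top.1 hlamlt)
        have hvgt : (WithTop.some zb : WithTop ↥I₂) < lam := by
          obtain ⟨q₀, hq₀⟩ := hAne
          exact lt_of_lt_of_le (hRgt zb q₀ (hAsub zb hq₀)) ((isLUB_olub _).1 hq₀)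
        refine ⟨v, ?_, ?_⟩
        · exact WithTop.coe_lt_coe.1 (by rw [hveq]; exact hvgt)
        · rw [show (WithTop.some v : WithTop ↥I₂) = lam from hveq]
          exact hker
      exact ⟨a0, (lemmaA hI₂ hh (hT1 (f a0)) hkey).symm⟩


end LemmaC19

section Final19
variable {J : Type v} [LinearOrder J] [WellFoundedLT J]
variable {X : Type u} [TopologicalSpace X]

theorem junique_diag (hU : JUnique J X) : JClosedSet J (X × X) (Set.diagonal X) := by
  intro I hI φ hφ hvals
  have h1 : Continuous (fun z => (φ z).1) := continuous_fst.comp hφ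
  have h2 : Continuous (fun z => (φ z).2) := continuous_snd.comp hφ
  have heq := hU I hI _ _ h1 h2 (fun i => Set.mem_diagonal_iff.1 (hvals i))
  exact Set.mem_diagonal_iff.2 (congrFun heq ⊤)

theorem t1_of_junique (hX : IsJConvergence J X) (hU : JUnique J X) :
    ∀ x : X, IsClosed ({x} : Set X) := by
  intro x
  by_contra hcl
  obtain ⟨I, hI, f, hf, hin, hout⟩ := hX _ hcl
  have heq := hU I hI f (fun _ => x) hf continuous_const (fun i => hin i)
  exact hout (by rw [heq]; rfl)

theorem one_to_four (hU : JUnique J X) :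
    IsClosed[jTop J (X × X)] (Set.diagonal X) := by
  have hJ : JOpenSet J (X × X) (Set.diagonal X)ᶜ := by
    show JClosedSet J (X × X) (Set.diagonal X)ᶜᶜ
    rw [compl_compl]
    exact junique_diag hU
  exact @IsClosed.mk (X × X) (jTop J (X × X)) _ (isOpen_generateFrom_of_mem hJ)

theorem generated_jopen (U : Set X) (h : IsOpen[jTop J X] U) : JOpenSet J X U := by
  have h' : GenerateOpen {V : Set X | JOpenSet J X V} U := h
  clear h
  induction h' with
  | basic V hV => exact hV
  | univ =>
      intro I hI f hf hvals
      obtain ⟨w⟩ := hI.nonempty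
      exact absurd (hvals w) (by simp)
  | inter V W hV hW ihV ihW =>
      intro I hI f hf hvals
      by_cases hcase : ∀ u : ↥I, ∃ z : ↥I, u < z ∧ f (WithTop.some z) ∈ Vᶜ
      · have := lemmaR hI ihV hf hcase
        exact fun hmem => this hmem.1
      · push_neg at hcase
        obtain ⟨u, hu⟩ := hcase
        have hW' : ∀ u' : ↥I, ∃ z : ↥I, u' < z ∧ f (WithTop.some z) ∈ Wᶜ := by
          intro u'
          obtain ⟨z, hz⟩ := hI.exists_gt (max u u')
          have hzu : u < z := lt_of_le_of_lt (le_max_left _ _) hz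
          have hzu' : u' < z := lt_of_le_of_lt (le_max_right _ _) hz
          have hfz : f (WithTop.some z) ∈ (V ∩ W)ᶜ := hvals z
          have hfzV : f (WithTop.some z) ∈ V := not_not.1 (hu z hzu)
          exact ⟨z, hzu', fun hmem => hfz ⟨hfzV, hmem⟩⟩
        have := lemmaR hI ihW hf hW'
        exact fun hmem => this hmem.2
  | sUnion S hS ihS =>
      intro I hI f hf hvals hmem
      obtain ⟨t, htS, hft⟩ := hmem
      exact ihS t htS I hI f hf (fun i hin => (hvals i) ⟨t, htS, hin⟩) hft

theorem four_to_one (h4 : IsClosed[jTop J (X × X)] (Set.diagonal X)) : JUnique J X := by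
  have hopen : IsOpen[jTop J (X × X)] (Set.diagonal X)ᶜ := h4.isOpen_compl
  have hJ : JOpenSet J (X × X) (Set.diagonal X)ᶜ := generated_jopen _ hopen
  have hΔ : JClosedSet J (X × X) (Set.diagonal X) := by
    have h2 := hJ
    show JClosedSet J (X × X) (Set.diagonal X)
    rw [← compl_compl (Set.diagonal X)]
    exact h2
  intro I hI f g hf hg hagree
  have hφ : Continuous (fun z => (f z, g z)) := hf.prodMk hg
  have hfin := hΔ I hI _ hφ (fun i => Set.mem_diagonal_iff.2 (hagree i))
  funext z
  induction z using WithTop.recTopCoe with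
  | top => exact Set.mem_diagonal_iff.1 hfin
  | coe w => exact hagree w

/-- Common core of (2)⇒(1) and (3)⇒(1). -/
theorem unique_of_closed_images (hT1 : ∀ b : X, IsClosed ({b} : Set X))
    (himg : ∀ (I : Set J), AlmostClosed I → ∀ f : WithTop ↥I → X, Continuous f →
      ∀ zb : ↥I, IsClosed (f '' (Ici (WithTop.some zb)))) : JUnique J X := by
  intro I hI f g hf hg hagree
  have hft : f ⊤ = g ⊤ := by
    by_contra hne
    have hP : ∀ u : ↥I, ∃ z : ↥I, u < z ∧ f (WithTop.some z) = g ⊤ := by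
      intro u
      obtain ⟨u', hu'⟩ := hI.exists_gt u
      set D : Set (WithTop ↥I) := Iio ⊤ ∩ Ioi (WithTop.some u') with hD
      have htopcl : (⊤ : WithTop ↥I) ∈ closure D := by
        rw [mem_closure_iff_lub]
        right
        obtain ⟨z₁, hz₁⟩ := hI.exists_gt u'
        have hz₁D : (WithTop.some z₁ : WithTop ↥I) ∈ D ∩ Iio ⊤ :=
          ⟨⟨WithTop.coe_lt_top _, WithTop.coe_lt_coe.2 hz₁⟩, WithTop.coe_lt_top _⟩
        refine ⟨⟨_, hz₁D⟩, fun q _ => le_top, ?_⟩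
        intro v hv
        by_contra hc
        have hvlt : v < ⊤ := lt_top_iff_ne_top.2 (fun hE => hc (hE ▸ le_rfl))
        obtain ⟨v₀, rfl⟩ := WithTop.ne_top_iff_exists.1 (lt_top_iff_ne_top.1 hvlt)
        obtain ⟨z₂, hz₂⟩ := hI.exists_gt (max v₀ u')
        have hzmem : (WithTop.some z₂ : WithTop ↥I) ∈ D ∩ Iio ⊤ :=
          ⟨⟨WithTop.coe_lt_top _,
            WithTop.coe_lt_coe.2 (lt_of_le_of_lt (le_max_right _ _) hz₂)⟩,
            WithTop.coe_lt_top _⟩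
        have := hv hzmem
        exact absurd (WithTop.coe_lt_coe.2 (lt_of_le_of_lt (le_max_left _ _) hz₂))
          (not_lt.2 this)
      have h1 : g ⊤ ∈ closure (g '' D) :=
        image_closure_subset_closure_image hg (mem_image_of_mem g htopcl)
      have h2 : g '' D = f '' D := by
        refine image_congr ?_
        rintro d ⟨hd1, _⟩
        obtain ⟨z, rfl⟩ := WithTop.ne_top_iff_exists.1 (lt_top_iff_ne_top.1 (mem_Iio.1 hd1))
        exact (hagree z).symm
      have h3 : f '' D ⊆ f '' Ici (WithTop.some u') :=
        image_mono (fun d hd => le_of_lt (mem_Ioi.1 hd.2))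
      have h4 : g ⊤ ∈ f '' Ici (WithTop.some u') := by
        have hcl := (himg I hI f hf u').closure_eq
        have hsub : closure (g '' D) ⊆ f '' Ici (WithTop.some u') := by
          rw [← hcl]
          refine closure_mono ?_
          rw [h2]
          exact h3
        exact hsub h1
      obtain ⟨w, hw, hweq⟩ := h4
      cases w with
      | top => exact absurd hweq hne
      | coe z =>
          refine ⟨z, ?_, hweq⟩
          have : (WithTop.some u' : WithTop ↥I) ≤ WithTop.some z := mem_Ici.1 hw
          exact lt_of_lt_of_le hu' (WithTop.coe_le_coe.1 this)
    exact hne (lemmaA hI hf (hT1 (g ⊤)) hP)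
  funext z
  induction z using WithTop.recTopCoe with
  | top => exact hft
  | coe w => exact hagree w

theorem two_to_one (h2 : ∀ C : Set X, IsCompact C → IsClosed C) : JUnique J X := by
  refine unique_of_closed_images (fun b => h2 {b} isCompact_singleton) ?_
  intro I hI f hf zb
  haveI : CompactSpace (WithTop ↥I) := wtop_compact
  exact h2 _ ((isClosed_Ici.isCompact).image hf)

theorem three_to_one
    (h3 : ∀ (K : Type v) (tK : TopologicalSpace K), @CompactSpace K tK → @T2Space K tK →
      ∀ f : K → X, Continuous[tK, _] f → @IsClosedMap K X tK _ f) : JUnique J X := by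
  refine unique_of_closed_images ?_ ?_
  · intro b
    haveI : CompactSpace (WithTop ↥(∅ : Set J)) := wtop_compact
    have hmap := h3 (WithTop ↥(∅ : Set J)) _ inferInstance inferInstance
      (fun _ => b) continuous_const
    have h := hmap _ isClosed_univ
    rwa [image_univ, range_const] at h
  · intro I hI f hf zb
    haveI : CompactSpace (WithTop ↥I) := wtop_compact
    exact h3 (WithTop ↥I) _ inferInstance inferInstance f hf _ isClosed_Ici

theorem two_to_three (h2 : ∀ C : Set X, IsCompact C → IsClosed C) :
    ∀ (K : Type v) (tK : TopologicalSpace K), @CompactSpace K tK → @T2Space K tK →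
      ∀ f : K → X, Continuous[tK, _] f → @IsClosedMap K X tK _ f := by
  intro K tK hcomp ht2 f hf A hA
  haveI := hcomp
  exact h2 _ ((hA.isCompact).image hf)

theorem one_to_two (hX : IsJConvergence J X) (hU : JUnique J X)
    (C : Set X) (hC : IsCompact C) : IsClosed C := by
  by_contra hcl
  obtain ⟨I, hI, f, hf, hin, hout⟩ := hX C hcl
  have hT1 : ∀ x : X, IsClosed ({x} : Set X) := t1_of_junique hX hU
  have hΔ := junique_diag hU
  have hglue : ∀ zb : ↥I, ∃ S : Set J, AlmostClosed S ∧ ∃ e : WithTop ↥S → WithTop ↥I,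
      Continuous e ∧ e ⊤ = ⊤ ∧
      (∀ w : ↥S, e (WithTop.some w) ∈ Iio ⊤ ∩ Ioi (WithTop.some zb)) ∧
      (∀ d ∈ (Iio ⊤ ∩ Ioi (WithTop.some zb) : Set (WithTop ↥I)),
        ∃ w : ↥S, e (WithTop.some w) = d) := by
    intro zb
    set D : Set (WithTop ↥I) := Iio ⊤ ∩ Ioi (WithTop.some zb) with hD
    have hD0 : D.Nonempty := by
      obtain ⟨z, hz⟩ := hI.exists_gt zb
      exact ⟨WithTop.some z, WithTop.coe_lt_top _, WithTop.coe_lt_coe.2 hz⟩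
    have hD1 : ∀ d ∈ D, d < (⊤ : WithTop ↥I) := fun d hd => mem_Iio.1 hd.1
    have hD2 : IsLUB D (⊤ : WithTop ↥I) := by
      refine ⟨fun d _ => le_top, fun v hv => ?_⟩
      by_contra hc
      have hvlt : v < ⊤ := lt_top_iff_ne_top.2 (fun hE => hc (hE ▸ le_rfl))
      obtain ⟨v₀, rfl⟩ := WithTop.ne_top_iff_exists.1 (lt_top_iff_ne_top.1 hvlt)
      obtain ⟨z₂, hz₂⟩ := hI.exists_gt (max v₀ zb)
      have hmem : (WithTop.some z₂ : WithTop ↥I) ∈ D :=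
        ⟨WithTop.coe_lt_top _, WithTop.coe_lt_coe.2 (lt_of_le_of_lt (le_max_right _ _) hz₂)⟩
      exact absurd (WithTop.coe_lt_coe.2 (lt_of_le_of_lt (le_max_left _ _) hz₂))
        (not_lt.2 (hv hmem))
    have hD4 : ∀ q, q < (⊤ : WithTop ↥I) → (D ∩ Iio q).Nonempty → IsLUB (D ∩ Iio q) q →
        q ∈ D := by
      intro q hq hne' _
      obtain ⟨d, hd, hdq⟩ := hne'
      exact ⟨hq, lt_trans (mem_Ioi.1 hd.2) (mem_Iio.1 hdq)⟩
    obtain ⟨S, hS, e, hecont, hetop, hmemD, hesurj, _, _⟩ := glue hI D ⊤ hD0 hD1 hD2 hD4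
    exact ⟨S, hS, e, hecont, hetop, hmemD, hesurj⟩
  have hEcl : ∀ (S : Set J), AlmostClosed S → ∀ e : WithTop ↥S → WithTop ↥I, Continuous e →
      IsClosed (Set.range (f ∘ e)) := by
    intro S hS e he
    by_contra hncl
    obtain ⟨I₂, hI₂, h₂, hh₂, hin₂, hout₂⟩ := hX _ hncl
    exact hout₂ (lemmaC' hT1 hΔ hS hI₂ (hf.comp he) hh₂ hin₂)
  set Z : ↥I → Set X := fun zb => closure (f '' (Iio ⊤ ∩ Ioi (WithTop.some zb))) with hZ
  have hfin : ∀ u : Finset ↥I, (C ∩ ⋂ zb ∈ u, Z zb).Nonempty := by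
    intro u
    haveI : Nonempty ↥I := hI.nonempty
    obtain ⟨M, hM⟩ := u.exists_le
    obtain ⟨z₁, hz₁⟩ := hI.exists_gt M
    refine ⟨f (WithTop.some z₁), hin z₁, ?_⟩
    refine mem_iInter₂.2 (fun zb hzb => ?_)
    refine subset_closure ⟨WithTop.some z₁, ⟨WithTop.coe_lt_top _, ?_⟩, rfl⟩
    exact WithTop.coe_lt_coe.2 (lt_of_le_of_lt (hM zb hzb) hz₁)
  obtain ⟨y, hyC, hyZ⟩ := hC.inter_iInter_nonempty Z (fun _ => isClosed_closure) hfin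
  rw [mem_iInter] at hyZ
  have hP : ∀ u : ↥I, ∃ z : ↥I, u < z ∧ f (WithTop.some z) = y := by
    intro u
    obtain ⟨S, hS, e, he, hetop, hememD, hesurj⟩ := hglue u
    have hycl : y ∈ Set.range (f ∘ e) := by
      have h1 : f '' (Iio ⊤ ∩ Ioi (WithTop.some u)) ⊆ Set.range (f ∘ e) := by
        rintro x ⟨d, hd, rfl⟩
        obtain ⟨w, hw⟩ := hesurj d hd
        exact ⟨WithTop.some w, by rw [Function.comp_apply, hw]⟩
      have h2 := closure_mono h1
      rw [(hEcl S hS e he).closure_eq] at h2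
      exact h2 (hyZ u)
    obtain ⟨v, hv⟩ := hycl
    cases v with
    | top =>
        have hv' : f ⊤ = y := by
          rw [← hv, Function.comp_apply, show (⊤ : WithTop ↥S) = ⊤ from rfl, hetop]
        exact absurd (hv' ▸ hyC) hout
    | coe w =>
        have hd : e (WithTop.some w) ∈ Iio ⊤ ∩ Ioi (WithTop.some u) := hememD w
        obtain ⟨z, hz⟩ := WithTop.ne_top_iff_exists.1 (lt_top_iff_ne_top.1 (mem_Iio.1 hd.1))
        refine ⟨z, ?_, ?_⟩
        · have hlt : (WithTop.some u : WithTop ↥I) < WithTop.some z := by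
            rw [hz]; exact mem_Ioi.1 hd.2
          exact WithTop.coe_lt_coe.1 hlt
        · rw [← hv, Function.comp_apply, ← hz]
  have hfy : f ⊤ = y := lemmaA hI hf (hT1 y) hP
  exact hout (hfy ▸ hyC)


end Final19

-- STATEMENT 19
theorem stmt19 {J : Type v} [LinearOrder J] [WellFoundedLT J] [TopologicalSpace J]
    [OrderTopology J] [NoncompactSpace J] {X : Type u} [TopologicalSpace X]
    (hX : IsJConvergence J X) :
    List.TFAE
      [JUnique J X,
       ∀ C : Set X, IsCompact C → IsClosed C,
       ∀ (K : Type v) (tK : TopologicalSpace K), @CompactSpace K tK → @T2Space K tK →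
         ∀ f : K → X, Continuous[tK, _] f → @IsClosedMap K X tK _ f,
       IsClosed[jTop J (X × X)] (Set.diagonal X)] := by
  tfae_have 1 → 2 := fun h1 C hC => one_to_two hX h1 C hC
  tfae_have 2 → 3 := two_to_three
  tfae_have 3 → 1 := three_to_one
  tfae_have 1 → 4 := one_to_four
  tfae_have 4 → 1 := four_to_one
  tfae_finish
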